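/- If α and β are distinct patterns, then there exist sets X ∈ F_α and Y ∈ F_β with X ∩ Y = ∅. Consequently, no ultrafilter F on ℕ satisfies both F_α ⊆ F and F_β ⊆ F; every ultrafilter contains the family F_α for at most one pattern α. -/

import Mathlib

open scoped Classical

/-- The set of primes, as a subset of the positive integers. -/
def primes : Set ℕ+ := {p | (p : ℕ).Prime}

/-- A pattern assigns a multiplicity in `ω` to each pair `(P, k)` of an ultrafilter
on `ℕ` and an exponent `k`, with finite support. -/
abbrev Pat : Type := ((Ultrafilter ℕ+) × ℕ) →₀ ℕ

/-- A pattern is only supported on pairs `(P, k)` where `ℙ ∈ P` and `k ≥ 1`. -/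
def IsPattern (α : Pat) : Prop :=
  ∀ Pk ∈ α.support, primes ∈ Pk.1 ∧ 0 < Pk.2

/-- `σ(α) = Σ k·α(P,k)`. -/
def sigmaPat (α : Pat) : ℕ := ∑ Pk ∈ α.support, Pk.2 * α Pk

/-- Given a pattern `α` and a choice `A` of a set of primes for each ultrafilter,
the set `{∏_i ∏_j p_{i,j}^{k_i} : p_{i,j} ∈ A(P_i) pairwise distinct}`. -/
def patBaseSet (α : Pat) (A : Ultrafilter ℕ+ → Set ℕ+) : Set ℕ+ :=
  { x | ∃ p : (Pk : (Ultrafilter ℕ+) × ℕ) → Fin (α Pk) → ℕ+,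
      (∀ Pk j, p Pk j ∈ A Pk.1) ∧
      Function.Injective (fun q : Σ Pk : (Ultrafilter ℕ+) × ℕ, Fin (α Pk) => p q.1 q.2) ∧
      x = ∏ Pk ∈ α.support, ∏ j : Fin (α Pk), (p Pk j) ^ Pk.2 }

/-- The family `F_α`: all sets obtained from choices of sets `A(P) ∈ P`, `A(P) ⊆ ℙ`,
with `A(P) ∩ A(P') = ∅` for distinct `P, P'` occurring in the support of `α`. -/
def FamF (α : Pat) : Set (Set ℕ+) :=
  { S | ∃ A : Ultrafilter ℕ+ → Set ℕ+,
      (∀ Pk ∈ α.support, A Pk.1 ∈ Pk.1 ∧ A Pk.1 ⊆ primes) ∧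
      (∀ Pk ∈ α.support, ∀ Pk' ∈ α.support, Pk.1 ≠ Pk'.1 → A Pk.1 ∩ A Pk'.1 = ∅) ∧
      S = patBaseSet α A }

/-- Separation lemma: pairwise disjoint sets of primes, one in each ultrafilter of `T`. -/
lemma ultra_sep (T : Finset (Ultrafilter ℕ+)) (hT : ∀ P ∈ T, primes ∈ P) :
    ∃ C : Ultrafilter ℕ+ → Set ℕ+, (∀ P ∈ T, C P ∈ P ∧ C P ⊆ primes) ∧
      ∀ P ∈ T, ∀ Q ∈ T, P ≠ Q → C P ∩ C Q = ∅ := by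
  have hsep : ∀ P Q : Ultrafilter ℕ+, P ≠ Q → ∃ s : Set ℕ+, s ∈ P ∧ sᶜ ∈ Q := by
    intro P Q hPQ
    by_contra h
    push_neg at h
    apply hPQ
    ext s
    constructor
    · intro hs
      by_contra hs'
      exact (h s hs (Ultrafilter.compl_mem_iff_notMem.2 hs')).elim
    · intro hs
      by_contra hs'
      have := h sᶜ (Ultrafilter.compl_mem_iff_notMem.2 hs')
      rw [compl_compl] at this
      exact this hs
  choose! s hs1 hs2 using hsep
  refine ⟨fun P => if P ∈ T then primes ∩ ⋂ Q ∈ (T : Set (Ultrafilter ℕ+)),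
      (if Q = P then Set.univ else s P Q ∩ (s Q P)ᶜ) else ∅, ?_, ?_⟩
  · intro P hP
    simp only [if_pos hP]
    constructor
    · apply Filter.inter_mem (hT P hP)
      rw [Filter.biInter_mem T.finite_toSet]
      intro Q hQ
      by_cases hQP : Q = P
      · simp [hQP]
      · rw [if_neg hQP]
        exact Filter.inter_mem (hs1 P Q (Ne.symm hQP))
          (Ultrafilter.compl_mem_iff_notMem.2
            (fun hmem => (Ultrafilter.compl_mem_iff_notMem.1 (hs2 Q P hQP)) hmem))
    · exact fun x hx => hx.1
  · intro P hP Q hQ hPQ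
    simp only [if_pos hP, if_pos hQ]
    ext x
    simp only [Set.mem_inter_iff, Set.mem_iInter, Set.mem_empty_iff_false, iff_false]
    rintro ⟨⟨-, h1⟩, -, h2⟩
    have h1' := h1 Q hQ
    rw [if_neg hPQ.symm] at h1'
    have h2' := h2 P hP
    rw [if_neg hPQ] at h2'
    exact h2'.2 h1'.1

/-- Counting lemma: for `x ∈ patBaseSet α A`, the number of primes dividing `x` with
exponent `k₀` lying in `A P₀` is exactly `α (P₀, k₀)`. -/
lemma count_lemma (α : Pat) (A : Ultrafilter ℕ+ → Set ℕ+)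
    (hprime : ∀ Pk ∈ α.support, A Pk.1 ⊆ primes)
    (hpos : ∀ Pk ∈ α.support, 0 < Pk.2)
    (P₀ : Ultrafilter ℕ+) (k₀ : ℕ) (hk₀ : 0 < k₀)
    (hdisj : ∀ Pk ∈ α.support, Pk.1 ≠ P₀ → A Pk.1 ∩ A P₀ = ∅)
    (x : ℕ+) (hx : x ∈ patBaseSet α A) :
    ((x : ℕ).factorization.support.filter
      fun q => (x : ℕ).factorization q = k₀ ∧ ∃ q' ∈ A P₀, (q' : ℕ) = q).card = α (P₀, k₀) := by
  obtain ⟨p, hpA, hpinj, hxeq⟩ := hx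
  have hpp : ∀ Pk ∈ α.support, ∀ j, ((p Pk j : ℕ)).Prime :=
    fun Pk hPk j => hprime Pk hPk (hpA Pk j)
  have hn : (x : ℕ) = ∏ Pk ∈ α.support, ∏ j : Fin (α Pk), ((p Pk j : ℕ)) ^ Pk.2 := by
    rw [hxeq]; push_cast; rfl
  have hf : (x : ℕ).factorization =
      ∑ Pk ∈ α.support, ∑ j : Fin (α Pk), Finsupp.single ((p Pk j : ℕ)) Pk.2 := by
    rw [hn, Nat.factorization_prod (fun Pk _ => Finset.prod_ne_zero_iff.2
      (fun j _ => pow_ne_zero _ (p Pk j).ne_zero))]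
    apply Finset.sum_congr rfl
    intro Pk hPk
    rw [Nat.factorization_prod (fun j _ => pow_ne_zero _ (p Pk j).ne_zero)]
    exact Finset.sum_congr rfl fun j _ => Nat.Prime.factorization_pow (hpp Pk hPk j)
  -- E1
  have E1 : ∀ Pk ∈ α.support, ∀ j : Fin (α Pk),
      (x : ℕ).factorization ((p Pk j : ℕ)) = Pk.2 := by
    intro Pk hPk j
    rw [hf, Finset.sum_sigma' α.support (fun _ => Finset.univ), Finsupp.finset_sum_apply]
    rw [Finset.sum_eq_single_of_mem (⟨Pk, j⟩ : Σ Pk : (Ultrafilter ℕ+) × ℕ, Fin (α Pk))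
      (Finset.mem_sigma.2 ⟨hPk, Finset.mem_univ _⟩)]
    · simp
    · rintro ⟨Pk', j'⟩ - hne
      apply Finsupp.single_eq_of_ne'
      intro heq
      exact hne (hpinj (PNat.coe_injective heq))
  -- E2
  have E2 : ∀ q : ℕ, (x : ℕ).factorization q ≠ 0 →
      ∃ Pk ∈ α.support, ∃ j : Fin (α Pk), ((p Pk j : ℕ)) = q := by
    intro q hq
    rw [hf, Finsupp.finset_sum_apply] at hq
    obtain ⟨Pk, hPk, hne⟩ := Finset.exists_ne_zero_of_sum_ne_zero hq
    rw [Finsupp.finset_sum_apply] at hne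
    obtain ⟨j, _, hj⟩ := Finset.exists_ne_zero_of_sum_ne_zero hne
    refine ⟨Pk, hPk, j, ?_⟩
    by_contra hne'
    exact hj (Finsupp.single_eq_of_ne' hne')
  have key : ((x : ℕ).factorization.support.filter
      fun q => (x : ℕ).factorization q = k₀ ∧ ∃ q' ∈ A P₀, (q' : ℕ) = q) =
      Finset.univ.image (fun j : Fin (α (P₀, k₀)) => ((p (P₀, k₀) j : ℕ))) := by
    ext q
    simp only [Finset.mem_filter, Finsupp.mem_support_iff, Finset.mem_image, Finset.mem_univ,
      true_and]
    constructor
    · rintro ⟨hq0, hqk, q', hq'A, hq'eq⟩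
      obtain ⟨Pk, hPk, j, hj⟩ := E2 q hq0
      have hk : Pk.2 = k₀ := by rw [← hj, E1 Pk hPk j] at hqk; exact hqk
      have hq'p : q' = p Pk j := PNat.coe_injective (by rw [hq'eq, hj])
      have hP : Pk.1 = P₀ := by
        by_contra hP
        have := hdisj Pk hPk hP
        have : p Pk j ∈ A Pk.1 ∩ A P₀ := ⟨hpA Pk j, hq'p ▸ hq'A⟩
        rw [hdisj Pk hPk hP] at this
        exact this
      have hPk' : Pk = (P₀, k₀) := Prod.ext hP hk
      subst hPk'
      exact ⟨j, hj⟩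
    · rintro ⟨j, hj⟩
      have hmem : (P₀, k₀) ∈ α.support := by
        rw [Finsupp.mem_support_iff]
        intro h0
        have hj2 := j.2
        omega
      have := E1 (P₀, k₀) hmem j
      subst hj
      exact ⟨by rw [this]; omega, this, p (P₀, k₀) j, hpA (P₀, k₀) j, rfl⟩
  rw [key, Finset.card_image_of_injective _ (fun j j' h => by
    have h2 : p (P₀, k₀) j = p (P₀, k₀) j' := PNat.coe_injective h
    have h3 := hpinj (a₁ := ⟨(P₀, k₀), j⟩) (a₂ := ⟨(P₀, k₀), j'⟩) h2
    simpa using h3), Finset.card_univ, Fintype.card_fin]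

theorem stmt7 (α β : Pat) (hα : IsPattern α) (hβ : IsPattern β) (hne : α ≠ β) :
    (∃ X ∈ FamF α, ∃ Y ∈ FamF β, X ∩ Y = ∅) ∧
    ∀ F : Ultrafilter ℕ+, ¬ ((∀ S ∈ FamF α, S ∈ F) ∧ (∀ S ∈ FamF β, S ∈ F)) := by
  have main : ∃ X ∈ FamF α, ∃ Y ∈ FamF β, X ∩ Y = ∅ := by
    set T : Finset (Ultrafilter ℕ+) := (α.support ∪ β.support).image Prod.fst with hT
    have hTmem : ∀ P ∈ T, primes ∈ P := by
      intro P hP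
      rw [hT, Finset.mem_image] at hP
      obtain ⟨Pk, hPk, rfl⟩ := hP
      rcases Finset.mem_union.1 hPk with h | h
      · exact (hα Pk h).1
      · exact (hβ Pk h).1
    obtain ⟨C, hC1, hC2⟩ := ultra_sep T hTmem
    set A : Ultrafilter ℕ+ → Set ℕ+ := fun P => if P ∈ T then C P else ∅ with hA
    have hAeq : ∀ Pk : (Ultrafilter ℕ+) × ℕ, Pk ∈ α.support ∪ β.support → A Pk.1 = C Pk.1 := by
      intro Pk hPk
      rw [hA]
      exact if_pos (show Pk.1 ∈ T from Finset.mem_image_of_mem Prod.fst hPk)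
    have hmemT : ∀ Pk : (Ultrafilter ℕ+) × ℕ, Pk ∈ α.support ∪ β.support → Pk.1 ∈ T :=
      fun Pk hPk => Finset.mem_image_of_mem Prod.fst hPk
    have hXF : patBaseSet α A ∈ FamF α := by
      refine ⟨A, ?_, ?_, rfl⟩
      · intro Pk hPk
        rw [hAeq Pk (Finset.mem_union_left _ hPk)]
        exact hC1 Pk.1 (hmemT Pk (Finset.mem_union_left _ hPk))
      · intro Pk hPk Pk' hPk' hne'
        rw [hAeq Pk (Finset.mem_union_left _ hPk), hAeq Pk' (Finset.mem_union_left _ hPk')]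
        exact hC2 Pk.1 (hmemT Pk (Finset.mem_union_left _ hPk)) Pk'.1
          (hmemT Pk' (Finset.mem_union_left _ hPk')) hne'
    have hYF : patBaseSet β A ∈ FamF β := by
      refine ⟨A, ?_, ?_, rfl⟩
      · intro Pk hPk
        rw [hAeq Pk (Finset.mem_union_right _ hPk)]
        exact hC1 Pk.1 (hmemT Pk (Finset.mem_union_right _ hPk))
      · intro Pk hPk Pk' hPk' hne'
        rw [hAeq Pk (Finset.mem_union_right _ hPk), hAeq Pk' (Finset.mem_union_right _ hPk')]
        exact hC2 Pk.1 (hmemT Pk (Finset.mem_union_right _ hPk)) Pk'.1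
          (hmemT Pk' (Finset.mem_union_right _ hPk')) hne'
    refine ⟨patBaseSet α A, hXF, patBaseSet β A, hYF, ?_⟩
    by_contra hcon
    obtain ⟨x, hxX, hxY⟩ := Set.nonempty_iff_ne_empty.2 hcon
    obtain ⟨Pk₀, hPk₀⟩ : ∃ Pk, α Pk ≠ β Pk := by
      by_contra h
      push_neg at h
      exact hne (Finsupp.ext h)
    have hPk₀mem : Pk₀ ∈ α.support ∪ β.support := by
      rcases Finset.mem_union.1 (Finset.mem_union.2 (by
        by_cases h : α Pk₀ = 0
        · exact Or.inr (Finsupp.mem_support_iff.2 (fun h' => hPk₀ (h.trans h'.symm)))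
        · exact Or.inl (Finsupp.mem_support_iff.2 h))) with h | h
      · exact Finset.mem_union_left _ h
      · exact Finset.mem_union_right _ h
    have hk₀pos : 0 < Pk₀.2 := by
      rcases Finset.mem_union.1 hPk₀mem with h | h
      · exact (hα Pk₀ h).2
      · exact (hβ Pk₀ h).2
    have hdisjα : ∀ Pk ∈ α.support, Pk.1 ≠ Pk₀.1 → A Pk.1 ∩ A Pk₀.1 = ∅ := by
      intro Pk hPk hne'
      rw [hAeq Pk (Finset.mem_union_left _ hPk), hAeq Pk₀ hPk₀mem]
      exact hC2 Pk.1 (hmemT Pk (Finset.mem_union_left _ hPk)) Pk₀.1 (hmemT Pk₀ hPk₀mem) hne'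
    have hdisjβ : ∀ Pk ∈ β.support, Pk.1 ≠ Pk₀.1 → A Pk.1 ∩ A Pk₀.1 = ∅ := by
      intro Pk hPk hne'
      rw [hAeq Pk (Finset.mem_union_right _ hPk), hAeq Pk₀ hPk₀mem]
      exact hC2 Pk.1 (hmemT Pk (Finset.mem_union_right _ hPk)) Pk₀.1 (hmemT Pk₀ hPk₀mem) hne'
    have cα := count_lemma α A (fun Pk hPk => by
        rw [hAeq Pk (Finset.mem_union_left _ hPk)]
        exact (hC1 Pk.1 (hmemT Pk (Finset.mem_union_left _ hPk))).2)
      (fun Pk hPk => (hα Pk hPk).2) Pk₀.1 Pk₀.2 hk₀pos hdisjα x hxX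
    have cβ := count_lemma β A (fun Pk hPk => by
        rw [hAeq Pk (Finset.mem_union_right _ hPk)]
        exact (hC1 Pk.1 (hmemT Pk (Finset.mem_union_right _ hPk))).2)
      (fun Pk hPk => (hβ Pk hPk).2) Pk₀.1 Pk₀.2 hk₀pos hdisjβ x hxY
    rw [cα] at cβ
    simp only [Prod.mk.eta] at cβ
    exact hPk₀ cβ
  refine ⟨main, ?_⟩
  intro F ⟨hFα, hFβ⟩
  obtain ⟨X, hX, Y, hY, hXY⟩ := main
  have : X ∩ Y ∈ F := Filter.inter_mem (hFα X hX) (hFβ Y hY)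
  rw [hXY] at this
  exact Filter.empty_notMem (F : Filter ℕ+) this
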